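/- Fix c ∈ ℂⁿ and r ∈ ℝ, and define σ(z, w) = ((z + c w)/δ(z,w), w/δ(z,w)), where δ(z,w) = 1 − 2i⟨c̄, z⟩ + (r − i‖c‖²)w and ⟨a, b⟩ = Σⱼ aⱼ bⱼ. Then for every (z,w) ∈ ℂⁿ × ℂ with Im w = ‖z‖² and δ(z,w) ≠ 0, the image σ(z,w) = (z', w') again satisfies Im w' = ‖z'‖². -/

import Mathlib

/-- The denominator `δ(z,w) = 1 − 2i⟨c̄, z⟩ + (r − i‖c‖²)w`. -/
noncomputable def heisenbergDelta (n : ℕ) (c : Fin n → ℂ) (r : ℝ)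
    (z : Fin n → ℂ) (w : ℂ) : ℂ :=
  1 - 2 * Complex.I * (∑ j, (starRingEnd ℂ) (c j) * z j) +
    ((r : ℂ) - Complex.I * ((∑ j, ‖c j‖ ^ 2 : ℝ) : ℂ)) * w

theorem fractional_isotropy_preserves_heisenberg (n : ℕ) (c : Fin n → ℂ) (r : ℝ)
    (z : Fin n → ℂ) (w : ℂ)
    (hM : w.im = ∑ j, ‖z j‖ ^ 2)
    (hδ : heisenbergDelta n c r z w ≠ 0) :
    (w / heisenbergDelta n c r z w).im =
      ∑ j, ‖(z j + c j * w) / heisenbergDelta n c r z w‖ ^ 2 := by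
  set δ := heisenbergDelta n c r z w with hδdef
  set S : ℂ := ∑ j, (starRingEnd ℂ) (c j) * z j with hS
  set K : ℝ := ∑ j, ‖c j‖ ^ 2 with hK
  have hns : Complex.normSq δ ≠ 0 := (Complex.normSq_pos.mpr hδ).ne'
  -- rewrite RHS
  have hRHS : ∑ j, ‖(z j + c j * w) / δ‖ ^ 2 =
      (∑ j, Complex.normSq (z j + c j * w)) / Complex.normSq δ := by
    simp only [norm_div, div_pow, Complex.sq_norm, Finset.sum_div]
  have hsum : ∑ j, Complex.normSq (z j + c j * w) =
      w.im + K * Complex.normSq w + 2 * (S * (starRingEnd ℂ) w).re := by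
    have h1 : ∀ j, Complex.normSq (z j + c j * w) =
        Complex.normSq (z j) + Complex.normSq (c j) * Complex.normSq w +
          2 * ((starRingEnd ℂ) (c j) * z j * (starRingEnd ℂ) w).re := by
      intro j
      rw [Complex.normSq_add, Complex.normSq_mul]
      congr 1
      rw [map_mul]
      have : z j * ((starRingEnd ℂ) (c j) * (starRingEnd ℂ) w) =
          (starRingEnd ℂ) (c j) * z j * (starRingEnd ℂ) w := by ring
      rw [this]
    simp only [h1, Finset.sum_add_distrib, ← Finset.sum_mul, ← Complex.re_sum,
      ← Finset.mul_sum]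
    have h2 : (∑ j, Complex.normSq (z j)) = w.im := by
      rw [hM]; exact Finset.sum_congr rfl fun j _ => (Complex.sq_norm (z j)).symm
    have h3 : (∑ j, Complex.normSq (c j)) = K := by
      rw [hK]; exact Finset.sum_congr rfl fun j _ => (Complex.sq_norm (c j)).symm
    rw [h2, h3, ← hS]
  -- key computation of the imaginary part
  have hkey : w.im * δ.re - w.re * δ.im =
      w.im + K * Complex.normSq w + 2 * (S * (starRingEnd ℂ) w).re := by
    have hδre : δ.re = 1 + 2 * S.im + r * w.re + K * w.im := by
      rw [hδdef]
      simp [heisenbergDelta, ← hS, ← hK, Complex.add_re, Complex.sub_re,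
        Complex.mul_re, Complex.mul_im, Complex.I_re, Complex.I_im]
      ring
    have hδim : δ.im = -2 * S.re + r * w.im - K * w.re := by
      rw [hδdef]
      simp [heisenbergDelta, ← hS, ← hK, Complex.add_im, Complex.sub_im,
        Complex.mul_re, Complex.mul_im, Complex.I_re, Complex.I_im]
      ring
    rw [hδre, hδim]
    simp [Complex.mul_re, Complex.normSq_apply, Complex.conj_re, Complex.conj_im]
    ring
  rw [hRHS, hsum, ← hkey, Complex.div_im]
  ring
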